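/- Let B be a finite Blaschke product with B(0) = 0 and let H^2(B) be the closed linear span of {B^m : m ∈ ℕ} in H^2(𝕋). For φ ∈ H^2, the set {B^m φ : m ∈ ℕ} is orthonormal in H^2 if and only if for every f ∈ H^2(B), ‖φ·f‖_2 = ‖f‖_2 (in particular φ multiplies H^2(B) isometrically into H^2). -/

import Mathlib

open MeasureTheory Complex ComplexConjugate
open scoped ENNReal
open scoped Real

noncomputable section

instance : Fact ((0:ℝ) < 1) := ⟨zero_lt_one⟩

abbrev T1 := AddCircle (1:ℝ)

def zfun : T1 → ℂ := fun t => fourier 1 t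

def hInner (f g : T1 → ℂ) : ℂ := ∫ t, f t * conj (g t)

def MemHp (p : ℝ≥0∞) (f : T1 → ℂ) : Prop :=
  MemLp f p volume ∧ ∀ n : ℤ, n < 0 → fourierCoeff f n = 0

def blaschke {n : ℕ} (α : Fin n → ℂ) : T1 → ℂ :=
  fun t => ∏ i, (zfun t - α i) / (1 - conj (α i) * zfun t)

def MemH2B (B f : T1 → ℂ) : Prop :=
  MemHp 2 f ∧ ∀ ε : ℝ, 0 < ε → ∃ c : ℕ →₀ ℂ,
    eLpNorm (fun t => f t - ∑ m ∈ c.support, c m * (B t) ^ m) 2 volume < ENNReal.ofReal ε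

lemma norm_zfun (t : T1) : ‖zfun t‖ = 1 := Circle.norm_coe _

lemma continuous_zfun : Continuous zfun := (fourier 1).continuous

lemma zfun_coe (x : ℝ) : zfun (x : T1) = Complex.exp (2 * π * Complex.I * x) := by
  rw [zfun, fourier_coe_apply]
  norm_num

lemma vol_eq_haar : (volume : Measure T1) = AddCircle.haarAddCircle := by
  rw [AddCircle.volume_eq_smul_haarAddCircle, ENNReal.ofReal_one, one_smul]

instance : IsProbabilityMeasure (volume : Measure T1) := by
  rw [vol_eq_haar]; infer_instance

/-- Mean value property specialized: holomorphic on a ball of radius `r > 1`,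
vanishing at 0, has zero average on the unit circle (as `T1`). -/
lemma mvp {F : ℂ → ℂ} {r : ℝ} (hr : 1 < r)
    (hF : DifferentiableOn ℂ F (Metric.ball (0:ℂ) r)) (h0 : F 0 = 0) :
    ∫ t : T1, F (zfun t) = 0 := by
  have hsub : Metric.closedBall (0:ℂ) 1 ⊆ Metric.ball 0 r := by
    intro z hz
    simp only [Metric.mem_closedBall, Metric.mem_ball] at *
    linarith
  have hball : Metric.ball (0:ℂ) 1 ⊆ Metric.ball 0 r :=
    (Metric.ball_subset_closedBall).trans hsub
  have hc : ContinuousOn F (Metric.closedBall (0:ℂ) 1) :=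
    (hF.continuousOn).mono hsub
  have hd : ∀ x ∈ Metric.ball (0:ℂ) 1 \ (∅ : Set ℂ), DifferentiableAt ℂ F x := by
    intro x hx
    exact (hF.differentiableAt (Metric.isOpen_ball.mem_nhds (hball hx.1)))
  have key := Complex.two_pi_I_inv_smul_circleIntegral_sub_inv_smul_of_differentiable_on_off_countable
    (Set.countable_empty) (Metric.mem_ball_self one_pos) hc hd
  rw [h0, smul_eq_zero] at key
  have h2pi : ((2 * ↑π * Complex.I)⁻¹ : ℂ) ≠ 0 := by
    simp [Real.pi_ne_zero, Complex.I_ne_zero]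
  have hcirc : (∮ z in C(0, 1), (z - 0)⁻¹ • F z) = 0 := key.resolve_left h2pi
  -- unfold the circle integral
  rw [circleIntegral] at hcirc
  simp only [deriv_circleMap, smul_eq_mul, sub_zero] at hcirc
  have hne : ∀ θ : ℝ, circleMap 0 1 θ ≠ 0 := fun θ => by simpa using circleMap_ne_center (c := (0:ℂ)) one_ne_zero (θ := θ)
  have hsimp : ∀ θ : ℝ, circleMap 0 1 θ * Complex.I * ((circleMap 0 1 θ)⁻¹ * F (circleMap 0 1 θ))
      = Complex.I * F (circleMap 0 1 θ) := by
    intro θ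
    field_simp [hne θ]
  rw [intervalIntegral.integral_congr (fun θ _ => hsimp θ)] at hcirc
  rw [intervalIntegral.integral_const_mul] at hcirc
  have hint : (∫ θ : ℝ in (0:ℝ)..(2*π), F (circleMap 0 1 θ)) = 0 := by
    rcases mul_eq_zero.1 hcirc with h | h
    · exact absurd h Complex.I_ne_zero
    · exact h
  -- now convert ∫ over T1 to interval integral
  have h1 : (∫ t : T1, F (zfun t)) = ∫ x in (0:ℝ)..(0+1), F (zfun (x : T1)) := by
    rw [← AddCircle.intervalIntegral_preimage 1 0 (fun t => F (zfun t))]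
  have h2 : (∫ x in (0:ℝ)..(0+1), F (zfun (x : T1)))
      = ∫ x in (0:ℝ)..1, F (circleMap 0 1 (2 * π * x)) := by
    rw [zero_add]
    refine intervalIntegral.integral_congr (fun x _ => ?_)
    rw [zfun_coe, circleMap_zero]
    norm_num
    ring_nf
  have h3 : (∫ x in (0:ℝ)..1, F (circleMap 0 1 (2 * π * x)))
      = (2*π)⁻¹ • ∫ θ in (2*π*0:ℝ)..(2*π*1), F (circleMap 0 1 θ) := by
    rw [← intervalIntegral.integral_comp_mul_left (fun θ => F (circleMap 0 1 θ))
      (by positivity : (2*π:ℝ) ≠ 0)]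
  rw [h1, h2, h3]
  rw [mul_zero, mul_one] at *
  rw [hint, smul_zero]

def Bc {n : ℕ} (α : Fin n → ℂ) : ℂ → ℂ :=
  fun w => ∏ i, (w - α i) / (1 - conj (α i) * w)

lemma blaschke_eq {n : ℕ} (α : Fin n → ℂ) (t : T1) : blaschke α t = Bc α (zfun t) := rfl

lemma denom_ne {a : ℂ} {w : ℂ} (h : ‖a‖ * ‖w‖ < 1) : 1 - conj a * w ≠ 0 := by
  intro hc
  have h1 : (1:ℂ) = conj a * w := by linear_combination hc
  have : (1:ℝ) = ‖conj a * w‖ := by rw [← h1]; simp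
  rw [norm_mul, RCLike.norm_conj] at this
  linarith

lemma norm_factor {z a : ℂ} (hz : ‖z‖ = 1) (ha : ‖a‖ < 1) :
    ‖(z - a) / (1 - conj a * z)‖ = 1 := by
  have hd : 1 - conj a * z ≠ 0 := denom_ne (by rw [hz, mul_one]; exact ha)
  have hzz : z * conj z = 1 := by
    rw [Complex.mul_conj]
    norm_cast
    rw [Complex.normSq_eq_norm_sq, hz, one_pow]
  have key : z - a = z * conj (1 - conj a * z) := by
    rw [map_sub, map_one, map_mul, conj_conj, mul_sub, mul_one]
    rw [show z * (a * conj z) = a * (z * conj z) by ring, hzz, mul_one]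
  rw [norm_div, key, norm_mul, RCLike.norm_conj, hz, one_mul,
    div_self (by simpa using norm_ne_zero_iff.2 hd)]

lemma norm_blaschke {n : ℕ} {α : Fin n → ℂ} (hα : ∀ i, ‖α i‖ < 1) (t : T1) :
    ‖blaschke α t‖ = 1 := by
  rw [blaschke, norm_prod]
  exact Finset.prod_eq_one fun i _ => norm_factor (norm_zfun t) (hα i)

lemma blaschke_ne_zero {n : ℕ} {α : Fin n → ℂ} (hα : ∀ i, ‖α i‖ < 1) (t : T1) :
    blaschke α t ≠ 0 := by
  intro h
  have := norm_blaschke hα t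
  rw [h] at this
  simp at this

lemma conj_blaschke {n : ℕ} {α : Fin n → ℂ} (hα : ∀ i, ‖α i‖ < 1) (t : T1) :
    conj (blaschke α t) = (blaschke α t)⁻¹ := by
  have h : blaschke α t * conj (blaschke α t) = 1 := by
    rw [Complex.mul_conj]
    norm_cast
    rw [Complex.normSq_eq_norm_sq, norm_blaschke hα t, one_pow]
  field_simp [blaschke_ne_zero hα t] at h ⊢
  linear_combination h

lemma continuous_blaschke {n : ℕ} {α : Fin n → ℂ} (hα : ∀ i, ‖α i‖ < 1) :
    Continuous (blaschke α) := by
  apply continuous_finset_prod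
  intro i _
  apply Continuous.div
  · exact continuous_zfun.sub continuous_const
  · exact continuous_const.sub (continuous_const.mul continuous_zfun)
  · intro t
    exact denom_ne (by rw [norm_zfun, mul_one]; exact hα i)

lemma exists_radius {n : ℕ} {α : Fin n → ℂ} (hα : ∀ i, ‖α i‖ < 1) :
    ∃ r : ℝ, 1 < r ∧ ∀ i, ∀ w ∈ Metric.ball (0:ℂ) r, 1 - conj (α i) * w ≠ 0 := by
  obtain ⟨a, ha0, ha1, haα⟩ : ∃ a : ℝ, 0 ≤ a ∧ a < 1 ∧ ∀ i, ‖α i‖ ≤ a := by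
    rcases Nat.eq_zero_or_pos n with h | h
    · exact ⟨0, le_refl _, one_pos, fun i => absurd (i.2.trans_eq h) (Nat.not_lt_zero _)⟩
    · have hne : (Finset.univ : Finset (Fin n)).Nonempty := by
        simp [Finset.univ_nonempty_iff, Fin.pos_iff_nonempty.1 h]
      refine ⟨Finset.univ.sup' hne (fun i => ‖α i‖), ?_, ?_, ?_⟩
      · obtain ⟨i⟩ := Fin.pos_iff_nonempty.1 h
        exact le_trans (norm_nonneg (α i)) (Finset.le_sup' (fun j => ‖α j‖) (Finset.mem_univ i))
      · rw [Finset.sup'_lt_iff]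
        exact fun i _ => hα i
      · exact fun i => Finset.le_sup' (fun j => ‖α j‖) (Finset.mem_univ i)
  refine ⟨2 / (1 + a), by rw [lt_div_iff₀ (by linarith)]; linarith, ?_⟩
  intro i w hw
  rw [Metric.mem_ball, dist_zero_right] at hw
  apply denom_ne
  have h1 : ‖α i‖ * ‖w‖ ≤ a * ‖w‖ := mul_le_mul_of_nonneg_right (haα i) (norm_nonneg w)
  have h2 : a * ‖w‖ ≤ a * (2 / (1+a)) := mul_le_mul_of_nonneg_left hw.le ha0
  have h3 : a * (2 / (1+a)) < 1 := by
    rw [mul_div_assoc', div_lt_one (by linarith)]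
    linarith
  linarith

lemma diffBc {n : ℕ} {α : Fin n → ℂ} {r : ℝ}
    (hne : ∀ i, ∀ w ∈ Metric.ball (0:ℂ) r, 1 - conj (α i) * w ≠ 0) :
    DifferentiableOn ℂ (Bc α) (Metric.ball (0:ℂ) r) := by
  apply DifferentiableOn.fun_finsetProd
  intro i _
  apply DifferentiableOn.div
  · exact (differentiable_id.sub_const _).differentiableOn
  · exact ((differentiable_const _).sub ((differentiable_const _).mul differentiable_id)).differentiableOn
  · exact fun w hw => hne i w hw

lemma Bc_zero {n : ℕ} (hn : 0 < n) {α : Fin n → ℂ} (hα0 : α ⟨0, hn⟩ = 0) : Bc α 0 = 0 := by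
  apply Finset.prod_eq_zero (Finset.mem_univ (⟨0, hn⟩ : Fin n))
  rw [hα0]
  simp

section BlaschkeIntegrals

lemma fourier_natpow (m : ℕ) (t : T1) : (fourier (m : ℤ) t : ℂ) = (zfun t) ^ m := by
  induction m with
  | zero => simp
  | succ k ih =>
      push_cast
      rw [fourier_add]
      push_cast at ih
      rw [ih, pow_succ]
      rfl

variable {n : ℕ} {α : Fin n → ℂ}

lemma int_pow_blaschke (hn : 0 < n) (hα : ∀ i, ‖α i‖ < 1) (hα0 : α ⟨0, hn⟩ = 0)
    (p j : ℕ) (h : 0 < p + j) :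
    ∫ t : T1, (zfun t) ^ p * (blaschke α t) ^ j = 0 := by
  obtain ⟨r, hr, hne⟩ := exists_radius hα
  have hd : DifferentiableOn ℂ (fun w => w ^ p * (Bc α w) ^ j) (Metric.ball (0:ℂ) r) :=
    ((differentiable_pow p).differentiableOn).mul ((diffBc hne).pow j)
  have h0 : (fun w => w ^ p * (Bc α w) ^ j) 0 = 0 := by
    rcases Nat.eq_zero_or_pos p with hp | hp
    · have hj : j ≠ 0 := by omega
      simp [hp, Bc_zero hn hα0, zero_pow hj]
    · simp [zero_pow (by omega : p ≠ 0)]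
  simpa [blaschke_eq] using mvp hr hd h0

lemma intB (hn : 0 < n) (hα : ∀ i, ‖α i‖ < 1) (hα0 : α ⟨0, hn⟩ = 0)
    (j : ℕ) (hj : 0 < j) : ∫ t : T1, (blaschke α t) ^ j = 0 := by
  simpa using int_pow_blaschke hn hα hα0 0 j (by omega)

lemma fourierCoeff_blaschke_pow_neg (hn : 0 < n) (hα : ∀ i, ‖α i‖ < 1)
    (hα0 : α ⟨0, hn⟩ = 0) (k : ℕ) {m : ℤ} (hm : m < 0) :
    fourierCoeff (fun t : T1 => (blaschke α t) ^ k) m = 0 := by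
  rw [fourierCoeff, ← vol_eq_haar]
  have h1 : (-m) = (((-m).toNat : ℕ) : ℤ) := (Int.toNat_of_nonneg (by omega)).symm
  have h2 : ∀ t : T1, (fourier (-m) t : ℂ) • (blaschke α t) ^ k
      = (zfun t) ^ (-m).toNat * (blaschke α t) ^ k := by
    intro t
    rw [smul_eq_mul, h1, fourier_natpow, Int.toNat_natCast]
  rw [integral_congr_ae (Filter.Eventually.of_forall h2)]
  exact int_pow_blaschke hn hα hα0 _ k (by omega)

lemma hBon_le (hn : 0 < n) (hα : ∀ i, ‖α i‖ < 1) (hα0 : α ⟨0, hn⟩ = 0)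
    {m k : ℕ} (hkm : k ≤ m) :
    (∫ t : T1, (blaschke α t) ^ m * conj ((blaschke α t) ^ k))
      = if m = k then 1 else 0 := by
  have hpt : ∀ t : T1, (blaschke α t) ^ m * conj ((blaschke α t) ^ k)
      = (blaschke α t) ^ (m - k) := by
    intro t
    rw [map_pow, conj_blaschke hα, inv_pow, pow_sub₀ _ (blaschke_ne_zero hα t) hkm]
  rw [integral_congr_ae (Filter.Eventually.of_forall hpt)]
  rcases eq_or_ne m k with h | h
  · simp [h, measure_univ]
  · rw [if_neg h]
    exact intB hn hα hα0 _ (by omega)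

lemma hBon (hn : 0 < n) (hα : ∀ i, ‖α i‖ < 1) (hα0 : α ⟨0, hn⟩ = 0)
    (m k : ℕ) :
    (∫ t : T1, (blaschke α t) ^ m * conj ((blaschke α t) ^ k))
      = if m = k then 1 else 0 := by
  rcases le_total k m with h | h
  · exact hBon_le hn hα hα0 h
  · have h1 := hBon_le hn hα hα0 h
    have h2 : (∫ t : T1, (blaschke α t) ^ m * conj ((blaschke α t) ^ k))
        = conj (∫ t : T1, (blaschke α t) ^ k * conj ((blaschke α t) ^ m)) := by
      rw [← integral_conj]
      refine integral_congr_ae (Filter.Eventually.of_forall fun t => ?_)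
      show _ = conj (blaschke α t ^ k * conj (blaschke α t ^ m))
      rw [map_mul, conj_conj, mul_comm]
    rw [h2, h1]
    rcases eq_or_ne m k with h3 | h3
    · simp [h3]
    · simp [h3, Ne.symm h3]

end BlaschkeIntegrals

section Plumbing

/-- The polynomial in `B` attached to a finitely-supported coefficient function. -/
def Pc (B : T1 → ℂ) (c : ℕ →₀ ℂ) : T1 → ℂ := fun t => ∑ m ∈ c.support, c m * (B t) ^ m

lemma Pc_sub (B : T1 → ℂ) (c d : ℕ →₀ ℂ) (t : T1) :
    Pc B (c - d) t = Pc B c t - Pc B d t := by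
  have h := Finsupp.sum_sub_index (f := c) (g := d) (h := fun m a => a * (B t) ^ m)
    (fun m b1 b2 => sub_mul _ _ _)
  simpa [Finsupp.sum, Pc] using h

variable {n : ℕ} {α : Fin n → ℂ}

lemma continuous_Pc (hα : ∀ i, ‖α i‖ < 1) (c : ℕ →₀ ℂ) :
    Continuous (Pc (blaschke α) c) := by
  apply continuous_finset_sum
  exact fun m _ => continuous_const.mul ((continuous_blaschke hα).pow m)

lemma norm_Pc_le (hα : ∀ i, ‖α i‖ < 1) (c : ℕ →₀ ℂ) (t : T1) :
    ‖Pc (blaschke α) c t‖ ≤ ∑ m ∈ c.support, ‖c m‖ := by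
  refine (norm_sum_le _ _).trans (le_of_eq (Finset.sum_congr rfl fun m _ => ?_))
  rw [norm_mul, norm_pow, norm_blaschke hα, one_pow, mul_one]

lemma memℒp_Pc (hα : ∀ i, ‖α i‖ < 1) (c : ℕ →₀ ℂ) :
    MemLp (Pc (blaschke α) c) 2 volume :=
  MemLp.of_bound ((continuous_Pc hα c).aestronglyMeasurable) _
    (Filter.Eventually.of_forall (norm_Pc_le hα c))

lemma memℒp_mul_Pc (hα : ∀ i, ‖α i‖ < 1) {φ : T1 → ℂ} (hφ : MemLp φ 2 volume)
    (c : ℕ →₀ ℂ) : MemLp (fun t => φ t * Pc (blaschke α) c t) 2 volume := by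
  refine MemLp.of_le_mul (c := ∑ m ∈ c.support, ‖c m‖) hφ (hφ.aestronglyMeasurable.mul
    (continuous_Pc hα c).aestronglyMeasurable) ?_
  refine Filter.Eventually.of_forall fun t => ?_
  rw [norm_mul, mul_comm]
  exact mul_le_mul_of_nonneg_right (norm_Pc_le hα c t) (norm_nonneg _)

lemma integrable_normsq {φ : T1 → ℂ} (hφ : MemLp φ 2 volume) :
    Integrable (fun t => ‖φ t‖ ^ 2) volume := by
  have h := hφ.integrable_norm_rpow (by norm_num) (by norm_num)
  have h2 : ((2:ℝ≥0∞).toReal) = ((2:ℕ):ℝ) := by norm_num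
  rw [h2] at h
  simpa [Real.rpow_natCast] using h

lemma integrable_Bphi_mul (hα : ∀ i, ‖α i‖ < 1) {φ : T1 → ℂ} (hφ : MemLp φ 2 volume)
    (m k : ℕ) :
    Integrable (fun t => ((blaschke α t) ^ m * φ t) *
      conj ((blaschke α t) ^ k * φ t)) volume := by
  refine Integrable.mono' (integrable_normsq hφ) ?_ ?_
  · have hb := (continuous_blaschke hα)
    have h1 := ((hb.pow m).aestronglyMeasurable.mul hφ.aestronglyMeasurable)
    have h2 := ((hb.pow k).aestronglyMeasurable.mul hφ.aestronglyMeasurable)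
    exact h1.mul (continuous_star.comp_aestronglyMeasurable h2)
  · refine Filter.Eventually.of_forall fun t => ?_
    show ‖_ * star _‖ ≤ _
    simp only [norm_mul, norm_star, norm_pow, norm_blaschke hα, one_pow, one_mul, mul_one]
    rw [pow_two]

lemma integrable_BB_mul (hα : ∀ i, ‖α i‖ < 1) (m k : ℕ) :
    Integrable (fun t => (blaschke α t) ^ m * conj ((blaschke α t) ^ k)) volume := by
  refine Integrable.mono' (integrable_const (1:ℝ)) ?_ ?_
  · have hb := (continuous_blaschke hα)
    exact ((hb.pow m).aestronglyMeasurable.mul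
      (continuous_star.comp_aestronglyMeasurable (hb.pow k).aestronglyMeasurable))
  · refine Filter.Eventually.of_forall fun t => ?_
    show ‖_ * star _‖ ≤ _
    simp [norm_mul, norm_star, norm_pow, norm_blaschke hα]

/-- Expansion of the inner product of two identical `Finsupp`-combinations. -/
lemma integral_sum_mul_conj (w : ℕ → T1 → ℂ)
    (hInt : ∀ m k, Integrable (fun t => w m t * conj (w k t)) volume) (c : ℕ →₀ ℂ) :
    (∫ t : T1, (∑ m ∈ c.support, c m * w m t) * conj (∑ k ∈ c.support, c k * w k t))
      = ∑ m ∈ c.support, ∑ k ∈ c.support,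
          c m * conj (c k) * ∫ t : T1, w m t * conj (w k t) := by
  have hpt : ∀ t : T1, (∑ m ∈ c.support, c m * w m t) * conj (∑ k ∈ c.support, c k * w k t)
      = ∑ m ∈ c.support, ∑ k ∈ c.support,
          (c m * conj (c k)) * (w m t * conj (w k t)) := by
    intro t
    rw [map_sum, Finset.sum_mul_sum]
    refine Finset.sum_congr rfl fun m _ => Finset.sum_congr rfl fun k _ => ?_
    rw [map_mul]
    ring
  rw [integral_congr_ae (Filter.Eventually.of_forall hpt)]
  rw [integral_finset_sum _ (fun m _ =>
    integrable_finset_sum _ (fun k _ => (hInt m k).const_mul _))]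
  refine Finset.sum_congr rfl fun m _ => ?_
  rw [integral_finset_sum _ (fun k _ => (hInt m k).const_mul _)]
  exact Finset.sum_congr rfl fun k _ => integral_const_mul _ _

lemma ortho_sum_collapse {W : ℕ → ℕ → ℂ} (hW : ∀ m k, W m k = if m = k then 1 else 0)
    (c : ℕ →₀ ℂ) :
    (∑ m ∈ c.support, ∑ k ∈ c.support, c m * conj (c k) * W m k)
      = ∑ m ∈ c.support, ((‖c m‖:ℂ)) ^ 2 := by
  refine Finset.sum_congr rfl fun m hm => ?_
  have h : ∀ k ∈ c.support, c m * conj (c k) * W m k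
      = if k = m then c m * conj (c m) else 0 := by
    intro k _
    rw [hW m k]
    by_cases h : m = k
    · simp [h, eq_comm]
    · simp [h, Ne.symm h]
  rw [Finset.sum_congr rfl h, Finset.sum_ite_eq' c.support m
    (fun _ => c m * conj (c m)), if_pos hm, Complex.mul_conj']

lemma integral_mul_conj_self (g : T1 → ℂ) :
    (∫ t : T1, g t * conj (g t)) = ((∫ t : T1, ‖g t‖ ^ 2 : ℝ) : ℂ) := by
  have hpt : ∀ t : T1, g t * conj (g t) = ((‖g t‖ ^ 2 : ℝ) : ℂ) := by
    intro t
    rw [Complex.mul_conj']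
    push_cast
    ring
  rw [integral_congr_ae (Filter.Eventually.of_forall hpt)]
  exact integral_ofReal

lemma elp_eq_iff {g h : T1 → ℂ} (hg : MemLp g 2 volume) (hh : MemLp h 2 volume) :
    eLpNorm g 2 volume = eLpNorm h 2 volume ↔
      (∫ t : T1, ‖g t‖ ^ 2) = ∫ t : T1, ‖h t‖ ^ 2 := by
  have h2 : ((2:ℝ≥0∞).toReal) = ((2:ℕ):ℝ) := by norm_num
  rw [hg.eLpNorm_eq_integral_rpow_norm (by norm_num) (by norm_num),
    hh.eLpNorm_eq_integral_rpow_norm (by norm_num) (by norm_num), h2]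
  simp_rw [Real.rpow_natCast]
  have hgn : (0:ℝ) ≤ ∫ t : T1, ‖g t‖ ^ 2 := integral_nonneg fun t => by positivity
  have hhn : (0:ℝ) ≤ ∫ t : T1, ‖h t‖ ^ 2 := integral_nonneg fun t => by positivity
  rw [ENNReal.ofReal_eq_ofReal_iff (Real.rpow_nonneg hgn _) (Real.rpow_nonneg hhn _)]
  constructor
  · intro hEq
    have h1 : ((∫ t : T1, ‖g t‖ ^ 2) ^ (((2:ℕ):ℝ))⁻¹) ^ ((2:ℕ):ℝ)
        = ((∫ t : T1, ‖h t‖ ^ 2) ^ (((2:ℕ):ℝ))⁻¹) ^ ((2:ℕ):ℝ) := by rw [hEq]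
    rw [← Real.rpow_mul hgn, ← Real.rpow_mul hhn] at h1
    norm_num at h1
    exact h1
  · intro hEq
    rw [hEq]

end Plumbing

section Backward

lemma integrable_of_continuous {μ : Measure T1} [IsFiniteMeasure μ] {f : T1 → ℂ}
    (hf : Continuous f) : Integrable f μ := by
  obtain ⟨C, hC⟩ := isCompact_univ.exists_bound_of_continuousOn hf.continuousOn
  exact memLp_one_iff_integrable.mp (MemLp.of_bound hf.aestronglyMeasurable C
    (Filter.Eventually.of_forall fun t => hC t (Set.mem_univ t)))

variable {n : ℕ} {α : Fin n → ℂ}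

lemma memH2B_Pc (hn : 0 < n) (hα : ∀ i, ‖α i‖ < 1) (hα0 : α ⟨0, hn⟩ = 0) (c : ℕ →₀ ℂ) :
    MemH2B (blaschke α) (Pc (blaschke α) c) := by
  refine ⟨⟨memℒp_Pc hα c, ?_⟩, ?_⟩
  · intro m hm
    have hlin : fourierCoeff (Pc (blaschke α) c) m
        = ∑ j ∈ c.support, c j * fourierCoeff (fun t : T1 => (blaschke α t) ^ j) m := by
      rw [fourierCoeff]
      have hpt : ∀ t : T1, (fourier (-m) t : ℂ) • Pc (blaschke α) c t
          = ∑ j ∈ c.support, c j * ((fourier (-m) t : ℂ) * (blaschke α t) ^ j) := by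
        intro t
        rw [smul_eq_mul, Pc, Finset.mul_sum]
        exact Finset.sum_congr rfl fun j _ => by ring
      rw [integral_congr_ae (Filter.Eventually.of_forall hpt),
        integral_finset_sum _ (fun j _ => (integrable_of_continuous
          (f := fun t => (fourier (-m) t : ℂ) * (blaschke α t) ^ j) (((fourier (-m)).continuous).mul ((continuous_blaschke hα).pow j))).const_mul _)]
      exact Finset.sum_congr rfl fun j _ => by
        rw [integral_const_mul, fourierCoeff]
        simp_rw [smul_eq_mul]
    rw [hlin]
    refine Finset.sum_eq_zero fun j _ => ?_
    rw [fourierCoeff_blaschke_pow_neg hn hα hα0 j hm, mul_zero]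
  · intro ε hε
    refine ⟨c, ?_⟩
    have h0 : (fun t => Pc (blaschke α) c t
        - ∑ m ∈ c.support, c m * (blaschke α t) ^ m) = fun _ => 0 := by
      funext t
      rw [Pc, sub_self]
    rw [h0, eLpNorm_zero']
    exact ENNReal.ofReal_pos.2 hε

lemma backward (hn : 0 < n) (hα : ∀ i, ‖α i‖ < 1) (hα0 : α ⟨0, hn⟩ = 0)
    {φ : T1 → ℂ} (hφ : MemHp 2 φ)
    (hiso : ∀ f : T1 → ℂ, MemH2B (blaschke α) f →
      eLpNorm (fun t => φ t * f t) 2 volume = eLpNorm f 2 volume)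
    (m k : ℕ) :
    hInner (fun t => (blaschke α t) ^ m * φ t)
      (fun t => (blaschke α t) ^ k * φ t) = if m = k then 1 else 0 := by
  have hφ2 := hφ.1
  set B := blaschke α with hB
  set W : ℕ → ℕ → ℂ := fun m k => ∫ t : T1, ((B t) ^ m * φ t) * conj ((B t) ^ k * φ t)
    with hWdef
  have key : ∀ c : ℕ →₀ ℂ,
      (∑ a ∈ c.support, ∑ b ∈ c.support, c a * conj (c b) * W a b)
        = ∑ a ∈ c.support, ((‖c a‖ : ℂ)) ^ 2 := by
    intro c
    have hiso' := hiso (Pc B c) (memH2B_Pc hn hα hα0 c)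
    rw [elp_eq_iff (memℒp_mul_Pc hα hφ2 c) (memℒp_Pc hα c)] at hiso'
    have h1 : (∫ t : T1, (∑ a ∈ c.support, c a * ((B t) ^ a * φ t))
          * conj (∑ b ∈ c.support, c b * ((B t) ^ b * φ t)))
        = ((∫ t : T1, ‖φ t * Pc B c t‖ ^ 2 : ℝ) : ℂ) := by
      rw [← integral_mul_conj_self]
      refine integral_congr_ae (Filter.Eventually.of_forall fun t => ?_)
      dsimp only
      have : ∑ a ∈ c.support, c a * ((B t) ^ a * φ t) = φ t * Pc B c t := by
        rw [Pc, Finset.mul_sum]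
        exact Finset.sum_congr rfl fun a _ => by ring
      rw [this]
    have h2 : (∫ t : T1, (∑ a ∈ c.support, c a * (B t) ^ a)
          * conj (∑ b ∈ c.support, c b * (B t) ^ b))
        = ((∫ t : T1, ‖Pc B c t‖ ^ 2 : ℝ) : ℂ) := integral_mul_conj_self _
    have h3 := integral_sum_mul_conj (fun a => fun t => (B t) ^ a * φ t)
      (integrable_Bphi_mul hα hφ2) c
    have h4 := integral_sum_mul_conj (fun a => fun t => (B t) ^ a)
      (integrable_BB_mul hα) c
    rw [h1, hiso'] at h3
    rw [h2] at h4
    rw [← h3, h4, ortho_sum_collapse (hBon hn hα hα0) c]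
  -- diagonal case:
  have hdiag : ∀ a : ℕ, W a a = 1 := by
    intro a
    have h := key (Finsupp.single a 1)
    rw [Finsupp.support_single_ne_zero a one_ne_zero] at h
    simpa using h
  rcases eq_or_ne m k with h | h
  · rw [if_pos h, h]
    exact hdiag k
  · rw [if_neg h]
    -- off-diagonal: use c = single m 1 + single k λ for λ = 1, I
    have hoff : ∀ lam : ℂ, lam ≠ 0 →
        conj lam * W m k + lam * W k m = 0 := by
      intro lam hlam
      set c := Finsupp.single m 1 + Finsupp.single k lam with hc
      have hsupp : c.support = {m, k} := by
        rw [hc, Finsupp.support_add_eq, Finsupp.support_single_ne_zero m one_ne_zero,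
          Finsupp.support_single_ne_zero k hlam]
        · rfl
        · rw [Finsupp.support_single_ne_zero m one_ne_zero,
            Finsupp.support_single_ne_zero k hlam]
          exact Finset.disjoint_singleton.2 h
      have hcm : c m = 1 := by
        rw [hc]
        simp [Finsupp.single_apply, h, Ne.symm h]
      have hck : c k = lam := by
        rw [hc]
        simp [Finsupp.single_apply, h, Ne.symm h]
      have hkey := key c
      rw [hsupp] at hkey
      rw [Finset.sum_pair h] at hkey
      rw [Finset.sum_pair h, Finset.sum_pair h, Finset.sum_pair h, hcm, hck] at hkey
      rw [hdiag m, hdiag k] at hkey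
      have hnorm1 : ((‖(1:ℂ)‖ : ℂ)) ^ 2 = 1 := by norm_num
      have hlamsq : lam * conj lam = ((‖lam‖ : ℂ)) ^ 2 := Complex.mul_conj' lam
      rw [hnorm1] at hkey
      have := hkey
      -- hkey : 1*conj 1*1 + 1*conj lam*W m k + (lam*conj 1*W k m + lam*conj lam*1) = 1 + ‖lam‖²
      rw [map_one] at this
      linear_combination this - hlamsq
    have h1 := hoff 1 one_ne_zero
    have h2 := hoff Complex.I Complex.I_ne_zero
    rw [map_one, one_mul, one_mul] at h1
    rw [Complex.conj_I] at h2
    have h3 : Complex.I * (W k m - W m k) = 0 := by linear_combination h2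
    have h4 : W k m = W m k := by
      rcases mul_eq_zero.1 h3 with hI | h5
      · exact absurd hI Complex.I_ne_zero
      · exact sub_eq_zero.1 h5
    have h5 : (2:ℂ) * W m k = 0 := by linear_combination h1 - h4
    have h6 : W m k = 0 := by
      rcases mul_eq_zero.1 h5 with h7 | h7
      · norm_num at h7
      · exact h7
    exact h6

end Backward

section Forward

variable {n : ℕ} {α : Fin n → ℂ}

lemma forward (hn : 0 < n) (hα : ∀ i, ‖α i‖ < 1) (hα0 : α ⟨0, hn⟩ = 0)
    {φ : T1 → ℂ} (hφ : MemHp 2 φ)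
    (horth : ∀ m k : ℕ, hInner (fun t => (blaschke α t) ^ m * φ t)
        (fun t => (blaschke α t) ^ k * φ t) = if m = k then 1 else 0)
    (f : T1 → ℂ) (hf : MemH2B (blaschke α) f) :
    eLpNorm (fun t => φ t * f t) 2 volume = eLpNorm f 2 volume := by
  have hφ2 := hφ.1
  set B := blaschke α with hB
  obtain ⟨⟨hf2, _⟩, happ⟩ := hf
  -- isometry on polynomials
  have hpoly : ∀ c : ℕ →₀ ℂ, eLpNorm (fun t => φ t * Pc B c t) 2 volume
      = eLpNorm (Pc B c) 2 volume := by
    intro c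
    rw [elp_eq_iff (memℒp_mul_Pc hα hφ2 c) (memℒp_Pc hα c)]
    have h3 := integral_sum_mul_conj (fun a => fun t => (B t) ^ a * φ t)
      (integrable_Bphi_mul hα hφ2) c
    have h4 := integral_sum_mul_conj (fun a => fun t => (B t) ^ a)
      (integrable_BB_mul hα) c
    have h1 : (∫ t : T1, (∑ a ∈ c.support, c a * ((B t) ^ a * φ t))
          * conj (∑ b ∈ c.support, c b * ((B t) ^ b * φ t)))
        = ((∫ t : T1, ‖φ t * Pc B c t‖ ^ 2 : ℝ) : ℂ) := by
      rw [← integral_mul_conj_self]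
      refine integral_congr_ae (Filter.Eventually.of_forall fun t => ?_)
      dsimp only
      have : ∑ a ∈ c.support, c a * ((B t) ^ a * φ t) = φ t * Pc B c t := by
        rw [Pc, Finset.mul_sum]
        exact Finset.sum_congr rfl fun a _ => by ring
      rw [this]
    have h2 : (∫ t : T1, (∑ a ∈ c.support, c a * (B t) ^ a)
          * conj (∑ b ∈ c.support, c b * (B t) ^ b))
        = ((∫ t : T1, ‖Pc B c t‖ ^ 2 : ℝ) : ℂ) := integral_mul_conj_self _
    rw [h1] at h3
    rw [h2] at h4
    have horth' : ∀ m k : ℕ, (∫ t : T1, (B t) ^ m * φ t * conj ((B t) ^ k * φ t))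
        = if m = k then 1 else 0 := horth
    have h3' : ((∫ t : T1, ‖φ t * Pc B c t‖ ^ 2 : ℝ) : ℂ)
        = ∑ a ∈ c.support, ((‖c a‖ : ℂ)) ^ 2 := by
      rw [h3]
      exact ortho_sum_collapse
        (W := fun m k => ∫ t : T1, (B t) ^ m * φ t * conj ((B t) ^ k * φ t)) horth' c
    have h4' : ((∫ t : T1, ‖Pc B c t‖ ^ 2 : ℝ) : ℂ)
        = ∑ a ∈ c.support, ((‖c a‖ : ℂ)) ^ 2 := by
      rw [h4]
      exact ortho_sum_collapse
        (W := fun m k => ∫ t : T1, (B t) ^ m * conj ((B t) ^ k)) (hBon hn hα hα0) c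
    have := h3'.trans h4'.symm
    exact_mod_cast this
  -- choose approximating sequence
  have hcex : ∀ j : ℕ, ∃ c : ℕ →₀ ℂ,
      eLpNorm (fun t => f t - Pc B c t) 2 volume < ENNReal.ofReal (1/(j+1:ℝ)) := by
    intro j
    obtain ⟨c, hc⟩ := happ (1/(j+1:ℝ)) (by positivity)
    exact ⟨c, hc⟩
  choose cs hcs using hcex
  -- eLpNorm (Pc - f) → 0
  have hto0 : Filter.Tendsto (fun j => eLpNorm (fun t => Pc B (cs j) t - f t) 2 volume)
      Filter.atTop (nhds 0) := by
    have hb : ∀ j, eLpNorm (fun t => Pc B (cs j) t - f t) 2 volume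
        ≤ ENNReal.ofReal (1/(j+1:ℝ)) := by
      intro j
      rw [show (fun t => Pc B (cs j) t - f t) = -(fun t => f t - Pc B (cs j) t) by
        funext t
        show _ = -(f t - Pc B (cs j) t)
        ring]
      rw [eLpNorm_neg]
      exact (hcs j).le
    have hub : Filter.Tendsto (fun j : ℕ => ENNReal.ofReal (1/(j+1:ℝ)))
        Filter.atTop (nhds 0) := by
      rw [show (0:ℝ≥0∞) = ENNReal.ofReal 0 by simp]
      exact (ENNReal.continuous_ofReal.tendsto 0).comp
        tendsto_one_div_add_atTop_nhds_zero_nat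
    exact tendsto_of_tendsto_of_tendsto_of_le_of_le tendsto_const_nhds hub
      (fun j => zero_le) hb
  -- Lp elements
  set pk : ℕ → Lp ℂ 2 (volume : Measure T1) := fun j => (memℒp_Pc hα (cs j)).toLp _
  set qk : ℕ → Lp ℂ 2 (volume : Measure T1) :=
    fun j => (memℒp_mul_Pc hα hφ2 (cs j)).toLp _
  set fL : Lp ℂ 2 (volume : Measure T1) := hf2.toLp f
  have hpf : Filter.Tendsto pk Filter.atTop (nhds fL) := by
    rw [tendsto_iff_norm_sub_tendsto_zero]
    have heq : ∀ j, ‖pk j - fL‖ = (eLpNorm (fun t => Pc B (cs j) t - f t) 2 volume).toReal := by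
      intro j
      rw [show pk j - fL = ((memℒp_Pc hα (cs j)).sub hf2).toLp
        (fun t => Pc B (cs j) t - f t) from (MemLp.toLp_sub _ _).symm]
      exact Lp.norm_toLp _ _
    simp_rw [heq]
    have : Filter.Tendsto (fun j => (eLpNorm (fun t => Pc B (cs j) t - f t) 2 volume))
        Filter.atTop (nhds 0) := hto0
    exact (ENNReal.tendsto_toReal (by simp)).comp this
  have hdist : ∀ i j, dist (qk i) (qk j) = dist (pk i) (pk j) := by
    intro i j
    rw [dist_eq_norm, dist_eq_norm]
    have e1 : qk i - qk j = ((memℒp_mul_Pc hα hφ2 (cs i)).sub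
        (memℒp_mul_Pc hα hφ2 (cs j))).toLp
        (fun t => φ t * Pc B (cs i) t - φ t * Pc B (cs j) t) := (MemLp.toLp_sub _ _).symm
    have e2 : pk i - pk j = ((memℒp_Pc hα (cs i)).sub (memℒp_Pc hα (cs j))).toLp
        (fun t => Pc B (cs i) t - Pc B (cs j) t) := (MemLp.toLp_sub _ _).symm
    rw [e1, e2, Lp.norm_toLp, Lp.norm_toLp]
    congr 1
    have hps : (fun t => φ t * Pc B (cs i) t - φ t * Pc B (cs j) t)
        = fun t => φ t * Pc B (cs i - cs j) t := by
      funext t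
      rw [Pc_sub]
      ring
    have hps2 : (fun t => Pc B (cs i) t - Pc B (cs j) t)
        = fun t => Pc B (cs i - cs j) t := by
      funext t
      rw [Pc_sub]
    rw [hps, hps2, hpoly (cs i - cs j)]
  have hqc : CauchySeq qk := by
    rw [Metric.cauchySeq_iff]
    have hpc := hpf.cauchySeq
    rw [Metric.cauchySeq_iff] at hpc
    intro ε hε
    obtain ⟨N, hN⟩ := hpc ε hε
    exact ⟨N, fun a ha b hb => by rw [hdist]; exact hN a ha b hb⟩
  obtain ⟨g, hg⟩ := cauchySeq_tendsto_of_complete hqc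
  -- a.e. convergence of the polynomials to f along a subsequence
  have htm : TendstoInMeasure volume (fun j => Pc B (cs j)) Filter.atTop f := by
    refine tendstoInMeasure_of_tendsto_eLpNorm_of_ne_top (p := 2) (by norm_num) (by norm_num)
      (fun j => (continuous_Pc hα (cs j)).aestronglyMeasurable)
      hf2.aestronglyMeasurable ?_
    exact hto0
  obtain ⟨ns, hns_mono, hae⟩ := htm.exists_seq_tendsto_ae
  have hq2 : Filter.Tendsto (fun i => qk (ns i)) Filter.atTop (nhds g) :=
    hg.comp hns_mono.tendsto_atTop
  -- a.e. convergence of φ · polynomials to (the function of) g along a further subsequence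
  have htm2 : TendstoInMeasure volume (fun i => fun t => φ t * Pc B (cs (ns i)) t)
      Filter.atTop (⇑g) := by
    refine tendstoInMeasure_of_tendsto_eLpNorm_of_ne_top (p := 2) (by norm_num) (by norm_num)
      (fun i => hφ2.aestronglyMeasurable.mul
        (continuous_Pc hα (cs (ns i))).aestronglyMeasurable)
      (Lp.aestronglyMeasurable g) ?_
    have heq : ∀ i, eLpNorm ((fun t => φ t * Pc B (cs (ns i)) t) - ⇑g) 2 volume
        = ENNReal.ofReal (dist (qk (ns i)) g) := by
      intro i
      have hae1 : ((fun t => φ t * Pc B (cs (ns i)) t) - ⇑g)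
          =ᵐ[volume] ⇑(qk (ns i) - g) := by
        have h1 := MemLp.coeFn_toLp (memℒp_mul_Pc hα hφ2 (cs (ns i)))
        have h2 := Lp.coeFn_sub (qk (ns i)) g
        filter_upwards [h1, h2] with t h1t h2t
        have hq : (qk (ns i)) t = φ t * Pc B (cs (ns i)) t := h1t
        rw [Pi.sub_apply, h2t, Pi.sub_apply, hq]
      rw [eLpNorm_congr_ae hae1, dist_eq_norm, Lp.norm_def,
        ENNReal.ofReal_toReal (Lp.eLpNorm_ne_top _)]
    have hlim : Filter.Tendsto (fun i => ENNReal.ofReal (dist (qk (ns i)) g))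
        Filter.atTop (nhds 0) := by
      rw [show (0:ℝ≥0∞) = ENNReal.ofReal 0 by simp]
      apply (ENNReal.continuous_ofReal.tendsto 0).comp
      rw [show (0:ℝ) = dist g g by simp]
      exact (Filter.Tendsto.dist hq2 tendsto_const_nhds)
    exact Filter.Tendsto.congr (fun i => (heq i).symm) hlim
  obtain ⟨ms, hms_mono, hae2⟩ := htm2.exists_seq_tendsto_ae
  -- combine a.e. limits
  have haeq : (fun t => φ t * f t) =ᵐ[volume] ⇑g := by
    have hae' : ∀ᵐ t ∂(volume : Measure T1),
        Filter.Tendsto (fun i => φ t * Pc B (cs (ns (ms i))) t) Filter.atTop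
          (nhds (φ t * f t)) := by
      filter_upwards [hae] with t ht
      exact (ht.comp hms_mono.tendsto_atTop).const_mul (φ t)
    filter_upwards [hae', hae2] with t h1t h2t
    exact tendsto_nhds_unique h1t h2t
  -- conclude
  have hfin1 : eLpNorm (fun t => φ t * f t) 2 volume = eLpNorm (⇑g) 2 volume :=
    eLpNorm_congr_ae haeq
  have hnorm_eq : ∀ j, ‖qk j‖ = ‖pk j‖ := by
    intro j
    rw [Lp.norm_toLp, Lp.norm_toLp, hpoly (cs j)]
  have hgn : Filter.Tendsto (fun i => ‖qk (ns i)‖) Filter.atTop (nhds ‖g‖) := hq2.norm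
  have hfn : Filter.Tendsto (fun i => ‖pk (ns i)‖) Filter.atTop (nhds ‖fL‖) :=
    (hpf.comp hns_mono.tendsto_atTop).norm
  have hng : ‖g‖ = ‖fL‖ := by
    refine tendsto_nhds_unique ?_ hfn
    have : (fun i => ‖pk (ns i)‖) = fun i => ‖qk (ns i)‖ := by
      funext i
      rw [hnorm_eq]
    rw [this]
    exact hgn
  have hfin2 : eLpNorm (⇑g) 2 volume = eLpNorm f 2 volume := by
    have h1 : (eLpNorm (⇑g) 2 volume).toReal = (eLpNorm f 2 volume).toReal := by
      rw [← Lp.norm_def, ← Lp.norm_toLp f hf2, hng]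
    have h2 : eLpNorm (⇑g) 2 volume ≠ ⊤ := Lp.eLpNorm_ne_top g
    have h3 : eLpNorm f 2 volume ≠ ⊤ := hf2.2.ne
    exact (ENNReal.toReal_eq_toReal_iff' h2 h3).1 h1
  rw [hfin1, hfin2]

end Forward


theorem B_inner_iff_isometric_on_H2B (n : ℕ) (hn : 0 < n) (α : Fin n → ℂ)
    (hα : ∀ i, ‖α i‖ < 1) (hα0 : α ⟨0, hn⟩ = 0)
    (φ : T1 → ℂ) (hφ : MemHp 2 φ) :
    (∀ m k : ℕ, hInner (fun t => (blaschke α t) ^ m * φ t)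
        (fun t => (blaschke α t) ^ k * φ t) = if m = k then 1 else 0) ↔
    (∀ f : T1 → ℂ, MemH2B (blaschke α) f →
      eLpNorm (fun t => φ t * f t) 2 volume = eLpNorm f 2 volume) := by
  constructor
  · intro horth f hf
    exact forward hn hα hα0 hφ horth f hf
  · intro hiso m k
    exact backward hn hα hα0 hφ hiso m k
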